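/- Let λ_Q < 0 and s = 1/(1 − λ_Q) ∈ (0,1). Then the set ℱ_s ∩ {x : x_{n+1} > 0}, where ℱ_s = {x = (y, x_{n+1}, x_{n+2}) : yᵀ(Q − λ_Q I)y + 2gᵀy·x_{n+1} + λ_Q x_{n+1}² ≤ x_{n+1} x_{n+2}}, is a convex set; moreover every x in this set satisfies x_{n+2} − 2gᵀy − λ_Q x_{n+1} ≥ 0. -/

import Mathlib

open Matrix

private lemma dot_symm' {n : ℕ} (A : Matrix (Fin n) (Fin n) ℝ) (hA : A.IsSymm)
    (y z : Fin n → ℝ) : z ⬝ᵥ A.mulVec y = y ⬝ᵥ A.mulVec z := by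
  rw [Matrix.dotProduct_mulVec, ← Matrix.mulVec_transpose, hA.eq, dotProduct_comm]

private lemma expand_quad' {n : ℕ} (A : Matrix (Fin n) (Fin n) ℝ) (hA : A.IsSymm) (a b : ℝ)
    (y z : Fin n → ℝ) :
    (a • y + b • z) ⬝ᵥ A.mulVec (a • y + b • z) =
      a^2 * (y ⬝ᵥ A.mulVec y) + 2*a*b*(y ⬝ᵥ A.mulVec z) + b^2 * (z ⬝ᵥ A.mulVec z) := by
  simp only [add_dotProduct, Matrix.mulVec_add, Matrix.mulVec_smul, dotProduct_add,
    dotProduct_smul, smul_dotProduct, smul_eq_mul, dot_symm' A hA y z]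
  ring

private lemma expand_diff' {n : ℕ} (A : Matrix (Fin n) (Fin n) ℝ) (hA : A.IsSymm) (t t' : ℝ)
    (y z : Fin n → ℝ) :
    (t' • y - t • z) ⬝ᵥ A.mulVec (t' • y - t • z) =
      t'^2 * (y ⬝ᵥ A.mulVec y) - 2*t*t'*(y ⬝ᵥ A.mulVec z) + t^2 * (z ⬝ᵥ A.mulVec z) := by
  simp only [sub_dotProduct, Matrix.mulVec_sub, Matrix.mulVec_smul, dotProduct_sub,
    dotProduct_smul, smul_dotProduct, smul_eq_mul, dot_symm' A hA y z]
  ring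

private lemma expand_lin' {n : ℕ} (g : Fin n → ℝ) (a b : ℝ) (y z : Fin n → ℝ) :
    g ⬝ᵥ (a • y + b • z) = a * (g ⬝ᵥ y) + b * (g ⬝ᵥ z) := by
  simp only [dotProduct_add, dotProduct_smul, smul_eq_mul]

theorem Fs_cap_positive_convex {n : ℕ} (Q : Matrix (Fin n) (Fin n) ℝ)
    (g : EuclideanSpace ℝ (Fin n)) (lamQ : ℝ)
    (hQ : Q.IsSymm)
    (hlb : ∀ y : EuclideanSpace ℝ (Fin n), lamQ * ‖y‖ ^ 2 ≤ y ⬝ᵥ Q.mulVec y)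
    (hev : ∃ v : EuclideanSpace ℝ (Fin n), v ≠ 0 ∧ Q.mulVec v = lamQ • (v : Fin n → ℝ))
    (hneg : lamQ < 0)
    (S : Set (EuclideanSpace ℝ (Fin n) × ℝ × ℝ))
    (hS : S = {x : EuclideanSpace ℝ (Fin n) × ℝ × ℝ |
      x.1 ⬝ᵥ (Q - lamQ • (1 : Matrix (Fin n) (Fin n) ℝ)).mulVec x.1
          + 2 * (g ⬝ᵥ x.1) * x.2.1 + lamQ * x.2.1 ^ 2 ≤ x.2.1 * x.2.2 ∧
        0 < x.2.1}) :
    Convex ℝ S ∧ ∀ x ∈ S, 0 ≤ x.2.2 - 2 * (g ⬝ᵥ x.1) - lamQ * x.2.1 := by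
  subst hS
  set A : Matrix (Fin n) (Fin n) ℝ := Q - lamQ • (1 : Matrix (Fin n) (Fin n) ℝ) with hAdef
  have hAsymm : A.IsSymm := by
    unfold Matrix.IsSymm
    rw [hAdef, Matrix.transpose_sub, Matrix.transpose_smul, Matrix.transpose_one, hQ.eq]
  have hAq : ∀ y : EuclideanSpace ℝ (Fin n), 0 ≤ y ⬝ᵥ A.mulVec y := by
    intro y
    have h := hlb y
    have hn : ‖y‖ ^ 2 = y ⬝ᵥ y := by
      rw [EuclideanSpace.norm_eq, Real.sq_sqrt (Finset.sum_nonneg (fun i _ => sq_nonneg _))]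
      simp only [Real.norm_eq_abs, sq_abs, dotProduct, sq, abs_mul_abs_self]
    have hexp : y ⬝ᵥ A.mulVec y = y ⬝ᵥ Q.mulVec y - lamQ * (y ⬝ᵥ y) := by
      rw [hAdef, Matrix.sub_mulVec, dotProduct_sub, Matrix.smul_mulVec,
        Matrix.one_mulVec, dotProduct_smul, smul_eq_mul]
    rw [hexp]
    rw [hn] at h
    linarith
  constructor
  · intro x hx z hz a b ha hb hab
    simp only [Set.mem_setOf_eq] at hx hz ⊢
    obtain ⟨h1, ht⟩ := hx
    obtain ⟨h2, ht'⟩ := hz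
    simp only [Prod.fst_add, Prod.snd_add, Prod.smul_fst, Prod.smul_snd, smul_eq_mul]
    simp only [WithLp.ofLp_add, WithLp.ofLp_smul]
    rw [expand_quad' A hAsymm a b x.1 z.1, expand_lin' g a b x.1 z.1]
    have hT : 0 < a * x.2.1 + b * z.2.1 := by
      rcases eq_or_lt_of_le ha with rfl | ha'
      · simp only [zero_mul, zero_add] at *
        have hb1 : b = 1 := by linarith
        rw [hb1]; linarith
      · have : 0 ≤ b * z.2.1 := mul_nonneg hb ht'.le
        nlinarith
    refine ⟨?_, hT⟩
    have hslack3 : 0 ≤ z.2.1^2 * (x.1 ⬝ᵥ A.mulVec x.1) - 2*x.2.1*z.2.1*(x.1 ⬝ᵥ A.mulVec z.1)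
        + x.2.1^2 * (z.1 ⬝ᵥ A.mulVec z.1) := by
      have h := hAq ((z.2.1 • x.1 + (-x.2.1) • z.1 : EuclideanSpace ℝ (Fin n)))
      rw [WithLp.ofLp_add, WithLp.ofLp_smul, WithLp.ofLp_smul,
        expand_quad' A hAsymm z.2.1 (-x.2.1) x.1 z.1] at h
      nlinarith [h]
    have htt : 0 < x.2.1 * z.2.1 := mul_pos ht ht'
    have c1 : 0 ≤ (a * x.2.1 + b * z.2.1) *
        (a * z.2.1 * (x.2.1 * x.2.2 - (x.1 ⬝ᵥ A.mulVec x.1 + 2 * (g ⬝ᵥ x.1) * x.2.1 + lamQ * x.2.1 ^ 2))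
        + b * x.2.1 * (z.2.1 * z.2.2 - (z.1 ⬝ᵥ A.mulVec z.1 + 2 * (g ⬝ᵥ z.1) * z.2.1 + lamQ * z.2.1 ^ 2))) := by
      apply mul_nonneg hT.le
      have s1 : 0 ≤ x.2.1 * x.2.2 - (x.1 ⬝ᵥ A.mulVec x.1 + 2 * (g ⬝ᵥ x.1) * x.2.1 + lamQ * x.2.1 ^ 2) := by
        linarith
      have s2 : 0 ≤ z.2.1 * z.2.2 - (z.1 ⬝ᵥ A.mulVec z.1 + 2 * (g ⬝ᵥ z.1) * z.2.1 + lamQ * z.2.1 ^ 2) := by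
        linarith
      exact add_nonneg (mul_nonneg (mul_nonneg ha ht'.le) s1) (mul_nonneg (mul_nonneg hb ht.le) s2)
    have c2 : 0 ≤ a * b * (z.2.1^2 * (x.1 ⬝ᵥ A.mulVec x.1) - 2*x.2.1*z.2.1*(x.1 ⬝ᵥ A.mulVec z.1)
        + x.2.1^2 * (z.1 ⬝ᵥ A.mulVec z.1)) := mul_nonneg (mul_nonneg ha hb) hslack3
    nlinarith [c1, c2, htt]
  · rintro x ⟨hle, hpos⟩
    nlinarith [hAq x.1]
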